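/- There exists a positive constant θ such that for every integer n ≥ 3 and every integer ξ with 1 ≤ ξ ≤ n/log(n), the largest eigenvalue β₁(ξ) of the matrix M(ξ) satisfies β₁(ξ) ≤ 1 − θ·(ξ/n)^{4/3}. (Here log denotes the natural logarithm.) -/

import Mathlib

open Real Finset

noncomputable def dZ (x : ℝ) : ℝ := |x - round x|

lemma dZ_nonneg (x : ℝ) : 0 ≤ dZ x := abs_nonneg _

lemma dZ_le_half (x : ℝ) : dZ x ≤ 1/2 := abs_sub_round x

lemma dZ_le (x : ℝ) (m : ℤ) : dZ x ≤ |x - m| := by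
  rcases eq_or_ne (round x) m with h | h
  · rw [dZ, h]
  · have h1 : (1:ℝ) ≤ |(round x - m : ℤ)| := by
      exact_mod_cast Int.one_le_abs (sub_ne_zero.2 h)
    have h2 : |x - m| ≥ |((round x : ℝ) - m)| - |x - round x| := by
      have := abs_sub_abs_le_abs_sub ((round x : ℝ) - m) ((round x : ℝ) - x)
      have e : (round x : ℝ) - m - ((round x : ℝ) - x) = x - m := by ring
      rw [e] at this
      rw [abs_sub_comm ((round x:ℝ)) x] at this
      linarith
    have h3 : |x - round x| ≤ 1/2 := abs_sub_round x
    have h4 : |((round x : ℝ) - m)| = |((round x - m : ℤ) : ℝ)| := by push_cast; ring_nf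
    rw [h4] at h2
    have h5 : |((round x - m : ℤ) : ℝ)| ≥ 1 := by exact_mod_cast h1
    unfold dZ
    linarith

lemma dZ_add_int (x : ℝ) (m : ℤ) : dZ (x + m) = dZ x := by
  unfold dZ
  rw [round_add_intCast]
  push_cast
  ring_nf

lemma dZ_neg (x : ℝ) : dZ (-x) = dZ x := by
  have h1 : dZ (-x) ≤ dZ x := by
    have := dZ_le (-x) (-round x)
    rwa [show -x - ((-round x : ℤ) : ℝ) = -(x - round x) by push_cast; ring, abs_neg] at this
  have h2 : dZ x ≤ dZ (-x) := by
    have := dZ_le x (-round (-x))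
    rwa [show x - ((-round (-x) : ℤ) : ℝ) = -(-x - round (-x)) by push_cast; ring, abs_neg] at this
  linarith

lemma dZ_triangle (x y : ℝ) : dZ (x + y) ≤ dZ x + dZ y := by
  have := dZ_le (x + y) (round x + round y)
  have e : x + y - ((round x + round y : ℤ) : ℝ) = (x - round x) + (y - round y) := by
    push_cast; ring
  rw [e] at this
  exact this.trans (abs_add_le _ _)

lemma dZ_eq_abs {x : ℝ} (h : |x| ≤ 1/2) : dZ x = |x| := by
  have h1 : dZ x ≤ |x| := by simpa using dZ_le x 0
  have h2 : |x| ≤ dZ x := by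
    rcases eq_or_ne (round x) 0 with h0 | h0
    · unfold dZ; rw [h0]; push_cast; simp
    · have : (1:ℝ) ≤ |(round x : ℝ)| := by exact_mod_cast Int.one_le_abs h0
      have : |x - round x| ≥ |(round x : ℝ)| - |x| := by
        have := abs_sub_abs_le_abs_sub ((round x:ℝ)) x
        rw [abs_sub_comm] at this; linarith
      unfold dZ; linarith
  linarith

lemma cos_round_period (x : ℝ) : Real.cos (2 * π * x) = Real.cos (2 * π * (x - round x)) := by
  have : 2 * π * x = 2 * π * (x - round x) + (round x) * (2 * π) := by ring
  rw [this, Real.cos_add_int_mul_two_pi]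

lemma potential_lower (X : ℝ) : 4 * dZ X ^ 2 ≤ (1 - Real.cos (2 * π * X)) / 2 := by
  set t := X - round X with ht
  have habs : |t| ≤ 1/2 := abs_sub_round X
  have hd : dZ X = |t| := rfl
  rw [cos_round_period X, ← ht]
  have hsin : Real.sin (π * |t|) ^ 2 = (1 - Real.cos (2 * π * t)) / 2 := by
    have := Real.sin_sq_eq_half_sub (π * |t|)
    have e : 2 * (π * |t|) = 2 * π * |t| := by ring
    rw [e] at this
    have : Real.sin (π * |t|) ^ 2 = 1/2 - Real.cos (2 * π * |t|) / 2 := this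
    rcases abs_choice t with h | h
    · rw [h] at this ⊢; linarith
    · rw [h] at this
      rw [show 2 * π * -t = -(2*π*t) by ring, Real.cos_neg] at this
      rw [h]
      linarith
  have hjordan : 2 * |t| ≤ Real.sin (π * |t|) := by
    have h0 : (0:ℝ) ≤ π * |t| := by positivity
    have h1 : π * |t| ≤ π / 2 := by nlinarith [Real.pi_pos]
    have := Real.mul_le_sin h0 h1
    have e : 2 / π * (π * |t|) = 2 * |t| := by
      field_simp
    linarith [e ▸ this]
  have h2 : (2 * |t|)^2 ≤ Real.sin (π * |t|) ^ 2 := by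
    have : (0:ℝ) ≤ 2 * |t| := by positivity
    nlinarith
  rw [hd]
  nlinarith [sq_abs t]

open Real Finset
open Fin.NatCast Fin.CommRing

section Core
variable {n : ℕ} [NeZero n]

lemma sum_shift (g : Fin n → ℝ) (c : Fin n) : ∑ j, g (j + c) = ∑ j, g j :=
  Fintype.sum_equiv (Equiv.addRight c) _ _ (fun _ => rfl)

lemma telescope (x : Fin n → ℝ) (j : Fin n) (L : ℕ) :
    x (j + (L : Fin n)) - x j
      = ∑ i ∈ Finset.range L, (x (j + (i : Fin n) + 1) - x (j + (i : Fin n))) := by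
  induction L with
  | zero => simp
  | succ L ih =>
    rw [Finset.sum_range_succ, ← ih]
    have e : ((L + 1 : ℕ) : Fin n) = (L : Fin n) + 1 := by push_cast; ring
    rw [e, ← add_assoc]
    ring

lemma core (x a : Fin n → ℝ) (L : ℕ) (α : ℝ) (hα : 0 < α)
    (ha : ∀ j, 0 ≤ a j)
    (h2 : ∀ j : Fin n, α ≤ a j ∨ α ≤ a (j + (L : Fin n))) :
    ∑ j, x j ^ 2 ≤ (4/α) * ∑ j, a j * x j ^ 2
      + 2 * (L:ℝ)^2 * ∑ j, (x (j + 1) - x j)^2 := by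
  set F : Fin n → ℝ := fun m => (x (m + 1) - x m)^2 with hF
  set Δ : Fin n → ℝ := fun j => ∑ i ∈ Finset.range L, F (j + (i : Fin n)) with hΔ
  have hΔnn : ∀ j, 0 ≤ Δ j := fun j => Finset.sum_nonneg (fun i _ => sq_nonneg _)
  have hCS : ∀ j : Fin n, (x (j + (L : Fin n)) - x j)^2 ≤ (L:ℝ) * Δ j := by
    intro j
    rw [telescope x j L]
    have := sq_sum_le_card_mul_sum_sq (s := Finset.range L)
      (f := fun i => x (j + (i : Fin n) + 1) - x (j + (i : Fin n)))
    simpa [hΔ, hF, Finset.card_range] using this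
  have key : ∀ j : Fin n,
      x j ^ 2 ≤ (2/α) * (a j * x j ^ 2 + a (j + (L : Fin n)) * x (j + (L : Fin n)) ^ 2)
        + 2 * (L:ℝ) * Δ j := by
    intro j
    have h2j := h2 j
    have hnn1 : 0 ≤ a j * x j ^ 2 := mul_nonneg (ha j) (sq_nonneg _)
    have hnn2 : 0 ≤ a (j + (L : Fin n)) * x (j + (L : Fin n)) ^ 2 :=
      mul_nonneg (ha _) (sq_nonneg _)
    have hL : (0:ℝ) ≤ (L:ℝ) := Nat.cast_nonneg L
    have hΔj := hΔnn j
    have hdiv : (0:ℝ) ≤ 2/α := by positivity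
    have hm1 : 0 ≤ (2/α) * (a j * x j ^ 2) := mul_nonneg hdiv hnn1
    have hm2 : 0 ≤ (2/α) * (a (j + (L : Fin n)) * x (j + (L : Fin n)) ^ 2) := mul_nonneg hdiv hnn2
    have hm3 : 0 ≤ 2 * (L:ℝ) * Δ j := by positivity
    have hdistr : (2/α) * (a j * x j ^ 2 + a (j + (L : Fin n)) * x (j + (L : Fin n)) ^ 2)
        = (2/α) * (a j * x j ^ 2) + (2/α) * (a (j + (L : Fin n)) * x (j + (L : Fin n)) ^ 2) := by
      ring
    rw [hdistr]
    rcases h2j with h | h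
    · have : α * x j ^ 2 ≤ a j * x j ^ 2 := mul_le_mul_of_nonneg_right h (sq_nonneg _)
      have h1 : x j ^ 2 ≤ (2/α) * (a j * x j ^ 2) := by
        rw [div_mul_eq_mul_div, le_div_iff₀ hα]
        nlinarith [sq_nonneg (x j)]
      linarith
    · have hsq : x j ^ 2 ≤ 2 * x (j + (L : Fin n)) ^ 2 + 2 * (x (j + (L : Fin n)) - x j)^2 := by
        nlinarith [sq_nonneg (x (j + (L : Fin n)) + (x (j + (L : Fin n)) - x j))]
      have h1 : 2 * x (j + (L : Fin n)) ^ 2 ≤ (2/α) * (a (j + (L : Fin n)) * x (j + (L : Fin n)) ^ 2) := by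
        rw [div_mul_eq_mul_div, le_div_iff₀ hα]
        nlinarith [sq_nonneg (x (j + (L : Fin n)))]
      have h2' := hCS j
      linarith
  have hsum := Finset.sum_le_sum (fun j (_ : j ∈ Finset.univ) => key j)
  have e1 : ∑ j : Fin n, ((2/α) * (a j * x j ^ 2 + a (j + (L : Fin n)) * x (j + (L : Fin n)) ^ 2)
      + 2 * (L:ℝ) * Δ j)
      = (4/α) * ∑ j, a j * x j ^ 2 + 2 * (L:ℝ)^2 * ∑ j, F j := by
    rw [Finset.sum_add_distrib, ← Finset.mul_sum, ← Finset.mul_sum, Finset.sum_add_distrib]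
    rw [sum_shift (fun m => a m * x m ^ 2) ((L : Fin n))]
    have e2 : ∑ j : Fin n, Δ j = (L:ℝ) * ∑ j, F j := by
      rw [hΔ, Finset.sum_comm]
      have : ∀ i ∈ Finset.range L, ∑ j : Fin n, F (j + (i : Fin n)) = ∑ j : Fin n, F j :=
        fun i _ => sum_shift F _
      rw [Finset.sum_congr rfl this, Finset.sum_const, Finset.card_range, nsmul_eq_mul]
    rw [e2]; ring
  calc ∑ j, x j ^ 2 ≤ _ := hsum
    _ = _ := e1

end Core

/-- The `n×n` real symmetric matrix `M(ξ)` with `(j,j)` entry `(1/2)·cos(2πξj/n)`,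
entries `1/4` for `k ≡ j ± 1 (mod n)` (including the corners), and `0` elsewhere. -/
noncomputable def Mmat (n : ℕ) (ξ : ℤ) : Matrix (Fin n) (Fin n) ℝ :=
  Matrix.of fun j k =>
    if k = j then (1/2) * Real.cos (2 * Real.pi * (ξ : ℝ) * ((j : ℕ) : ℝ) / (n : ℝ))
    else if ((k : ℕ) : ZMod n) = ((j : ℕ) : ZMod n) + 1 ∨
        ((k : ℕ) : ZMod n) = ((j : ℕ) : ZMod n) - 1 then 1/4
    else 0

open Real Finset

section Mat
variable {n : ℕ} [NeZero n]

def cFZ {n : ℕ} (k : Fin n) : ZMod n := ((k : ℕ) : ZMod n)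

lemma cFZ_inj : Function.Injective (cFZ (n := n)) := fun a b hab => by
  apply Fin.ext
  have h := congrArg ZMod.val hab
  unfold cFZ at h
  rwa [ZMod.val_cast_of_lt a.isLt, ZMod.val_cast_of_lt b.isLt] at h

lemma cFZ_add_nat (j : Fin n) (m : ℕ) :
    cFZ (j + (m : Fin n)) = cFZ j + (m : ZMod n) := by
  unfold cFZ
  have h1 : ((j + (m : Fin n) : Fin n) : ℕ) = ((j : ℕ) + m % n) % n := by
    rw [Fin.add_def]
    simp [Fin.val_natCast]
  rw [h1]
  rw [ZMod.natCast_mod, Nat.cast_add, ZMod.natCast_mod]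

lemma cFZ_add_one (j : Fin n) : cFZ (j + 1) = cFZ j + 1 := by
  have := cFZ_add_nat j 1
  simpa using this

lemma neg_one_cast : (((n - 1 : ℕ)) : Fin n) = -1 := by
  have h1 : ((n : ℕ) : Fin n) = 0 := by
    simp [Fin.natCast_self]
  have h2 : ((n - 1 : ℕ) : Fin n) = (n : Fin n) - 1 := by
    have h : (1:ℕ) ≤ n := Nat.one_le_iff_ne_zero.2 (NeZero.ne n)
    push_cast [Nat.cast_sub h]
    ring
  rw [h2, h1]
  ring

lemma cFZ_sub_one (j : Fin n) : cFZ (j - 1) = cFZ j - 1 := by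
  have e : j - 1 = j + ((n - 1 : ℕ) : Fin n) := by
    rw [neg_one_cast]; ring
  rw [e, cFZ_add_nat]
  have h : ((n - 1 : ℕ) : ZMod n) = -1 := by
    have h1 : (1:ℕ) ≤ n := Nat.one_le_iff_ne_zero.2 (NeZero.ne n)
    rw [Nat.cast_sub h1]
    simp [ZMod.natCast_self]
  rw [h]; ring

end Mat

section Mat2
variable {n : ℕ} [NeZero n]

lemma fin_one_ne_zero (hn : 3 ≤ n) : (1 : Fin n) ≠ 0 := by
  intro h
  have h1 : ((1:ℕ) : Fin n) = 0 := by exact_mod_cast h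
  have h2 := congrArg Fin.val h1
  rw [Fin.val_natCast, Nat.mod_eq_of_lt (by omega)] at h2
  simp at h2

lemma fin_two_ne_zero (hn : 3 ≤ n) : (2 : Fin n) ≠ 0 := by
  intro h
  have h1 : ((2:ℕ) : Fin n) = 0 := by exact_mod_cast h
  have h2 := congrArg Fin.val h1
  rw [Fin.val_natCast, Nat.mod_eq_of_lt (by omega)] at h2
  simp at h2

lemma Mmat_mulVec (hn : 3 ≤ n) (ξ : ℤ) (v : Fin n → ℝ) (j : Fin n) :
    (Mmat n ξ).mulVec v j
      = (1/2) * Real.cos (2 * Real.pi * (ξ:ℝ) * ((j:ℕ):ℝ) / (n:ℝ)) * v j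
        + (1/4) * v (j + 1) + (1/4) * v (j - 1) := by
  have hd1 : j + 1 ≠ j := by
    intro h
    exact fin_one_ne_zero hn (by rwa [add_eq_left] at h)
  have hd2 : j - 1 ≠ j := by
    intro h
    exact fin_one_ne_zero hn (by rwa [sub_eq_self] at h)
  have hd3 : j + 1 ≠ j - 1 := by
    intro h
    apply fin_two_ne_zero hn
    have h0 : (j + 1) - (j - 1) = 0 := by rw [h]; ring
    calc (2 : Fin n) = (j + 1) - (j - 1) := by ring
      _ = 0 := h0
  have hp1 : ((((j + 1 : Fin n) : ℕ)) : ZMod n) = (((j : ℕ)) : ZMod n) + 1 := cFZ_add_one j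
  have hp2 : ((((j - 1 : Fin n) : ℕ)) : ZMod n) = (((j : ℕ)) : ZMod n) - 1 := cFZ_sub_one j
  have hmv : (Mmat n ξ).mulVec v j = ∑ k, Mmat n ξ j k * v k := by
    simp [Matrix.mulVec, dotProduct]
  rw [hmv]
  have hsub : ({j, j + 1, j - 1} : Finset (Fin n)) ⊆ Finset.univ := Finset.subset_univ _
  have hzero : ∀ k ∈ Finset.univ, k ∉ ({j, j + 1, j - 1} : Finset (Fin n)) →
      Mmat n ξ j k * v k = 0 := by
    intro k _ hk
    simp only [Finset.mem_insert, Finset.mem_singleton, not_or] at hk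
    obtain ⟨hk1, hk2, hk3⟩ := hk
    have e : Mmat n ξ j k = 0 := by
      rw [Mmat]
      simp only [Matrix.of_apply]
      rw [if_neg hk1, if_neg]
      rintro (h | h)
      · exact hk2 (cFZ_inj (by rw [cFZ_add_one j]; exact h))
      · exact hk3 (cFZ_inj (by rw [cFZ_sub_one j]; exact h))
    rw [e, zero_mul]
  rw [← Finset.sum_subset hsub hzero]
  have hmem1 : j ∉ ({j + 1, j - 1} : Finset (Fin n)) := by
    simp only [Finset.mem_insert, Finset.mem_singleton]
    push_neg
    exact ⟨fun h => hd1 h.symm, fun h => hd2 h.symm⟩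
  have hmem2 : (j + 1) ∉ ({j - 1} : Finset (Fin n)) := by
    simp only [Finset.mem_singleton]
    exact hd3
  rw [Finset.sum_insert hmem1, Finset.sum_insert hmem2, Finset.sum_singleton]
  have e1 : Mmat n ξ j j = (1/2) * Real.cos (2 * Real.pi * (ξ:ℝ) * ((j:ℕ):ℝ) / (n:ℝ)) := by
    simp [Mmat]
  have e2 : Mmat n ξ j (j + 1) = 1/4 := by
    rw [Mmat]; simp only [Matrix.of_apply]
    rw [if_neg hd1, if_pos (Or.inl hp1)]
  have e3 : Mmat n ξ j (j - 1) = 1/4 := by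
    rw [Mmat]; simp only [Matrix.of_apply]
    rw [if_neg hd2, if_pos (Or.inr hp2)]
  rw [e1, e2, e3]
  ring

end Mat2

section QF
variable {n : ℕ} [NeZero n]

lemma qform (hn : 3 ≤ n) (ξ : ℤ) (v : Fin n → ℝ) (β : ℝ)
    (hv : (Mmat n ξ).mulVec v = β • v) :
    (1 - β) * (∑ j : Fin n, v j ^ 2)
      = (∑ j : Fin n, ((1 - Real.cos (2 * Real.pi * (ξ:ℝ) * ((j:ℕ):ℝ) / (n:ℝ))) / 2) * v j ^ 2)
        + (1/4) * ∑ j : Fin n, (v (j + 1) - v j)^2 := by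
  set cth : Fin n → ℝ := fun j => Real.cos (2 * Real.pi * (ξ:ℝ) * ((j:ℕ):ℝ) / (n:ℝ)) with hcth
  have hper : ∀ j : Fin n, β * v j ^ 2
      = (1/2) * (cth j * v j ^ 2) + (1/4) * (v (j+1) * v j) + (1/4) * (v j * v (j-1)) := by
    intro j
    have h := congrFun hv j
    rw [Mmat_mulVec hn ξ v j] at h
    have h4 : (1/2) * cth j * v j + (1/4) * v (j + 1) + (1/4) * v (j - 1) = β * v j := by
      rw [h]; simp
    linear_combination (-(v j)) * h4
  have hsum := Finset.sum_congr rfl (fun j (_ : j ∈ Finset.univ) => hper j)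
  rw [← Finset.mul_sum] at hsum
  rw [Finset.sum_add_distrib, Finset.sum_add_distrib, ← Finset.mul_sum, ← Finset.mul_sum,
    ← Finset.mul_sum] at hsum
  set S := ∑ j, v j ^ 2 with hS
  set C := ∑ j, cth j * v j ^ 2 with hC
  set E := ∑ j, v (j+1) * v j with hE
  have hE' : (∑ j, v j * v (j - 1)) = E := by
    have h := sum_shift (fun m => v (m + 1) * v m) (-1)
    have e : ∀ j : Fin n, v (j + (-1) + 1) * v (j + (-1)) = v j * v (j - 1) := by
      intro j
      rw [show j + (-1) + 1 = j by ring, show j + (-1) = j - 1 by ring]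
    calc (∑ j, v j * v (j-1)) = ∑ j, v (j + (-1) + 1) * v (j + (-1)) :=
          (Finset.sum_congr rfl (fun j _ => (e j))).symm
      _ = E := h
  rw [hE'] at hsum
  -- hsum : β * S = 1/2 * C + 1/4 * E + 1/4 * E
  have hshift : (∑ j, v (j+1) ^ 2) = S := sum_shift (fun m => v m ^ 2) 1
  have hD : (∑ j, (v (j + 1) - v j)^2) = 2*S - 2*E := by
    have e : ∀ j : Fin n, (v (j + 1) - v j)^2
        = v (j+1) ^ 2 + v j ^ 2 - 2 * (v (j+1) * v j) := fun j => by ring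
    rw [Finset.sum_congr rfl (fun j _ => e j)]
    rw [Finset.sum_sub_distrib, Finset.sum_add_distrib, ← Finset.mul_sum, hshift]
    ring
  have hP : (∑ j, ((1 - cth j) / 2) * v j ^ 2) = S/2 - C/2 := by
    have e : ∀ j : Fin n, ((1 - cth j) / 2) * v j ^ 2
        = (1/2) * v j ^ 2 - (1/2) * (cth j * v j ^ 2) := fun j => by ring
    rw [Finset.sum_congr rfl (fun j _ => e j)]
    rw [Finset.sum_sub_distrib, ← Finset.mul_sum, ← Finset.mul_sum]
    ring
  rw [hP, hD]
  linarith [hsum]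

end QF

section Gap

lemma dZ_nat_mul {y : ℝ} (L : ℕ) (h : (L:ℝ) * dZ y ≤ 1/2) : dZ ((L:ℝ) * y) = (L:ℝ) * dZ y := by
  have hdec : (L:ℝ) * y = (L:ℝ) * (y - round y) + ((L * round y : ℤ) : ℝ) := by
    push_cast; ring
  rw [hdec, dZ_add_int]
  have habs : |(L:ℝ) * (y - round y)| = (L:ℝ) * dZ y := by
    rw [abs_mul, abs_of_nonneg (by positivity : (0:ℝ) ≤ (L:ℝ))]
    rfl
  rw [dZ_eq_abs (by rw [habs]; exact h), habs]

set_option maxHeartbeats 1000000 in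
lemma gap_lemma (n : ℕ) (hn : 3 ≤ n) (ξ : ℕ) (β : ℝ)
    (hβ : β ∈ spectrum ℝ (Mmat n (ξ:ℤ)))
    (L : ℕ) (hL : 1 ≤ L) (hs : 0 < dZ ((ξ:ℝ)/(n:ℝ)))
    (hLs : (L:ℝ) * dZ ((ξ:ℝ)/(n:ℝ)) ≤ 1/2) :
    min (((L:ℝ) * dZ ((ξ:ℝ)/(n:ℝ)))^2 / 4) (1/(8*(L:ℝ)^2)) ≤ 1 - β := by
  haveI : NeZero n := ⟨by omega⟩
  set s := dZ ((ξ:ℝ)/(n:ℝ)) with hsdef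
  have hn0 : (0:ℝ) < n := by positivity
  -- extract eigenvector
  rw [spectrum.mem_iff] at hβ
  set A := algebraMap ℝ (Matrix (Fin n) (Fin n) ℝ) β - Mmat n (ξ:ℤ) with hA
  have hdet : A.det = 0 := by
    by_contra hd
    exact hβ ((Matrix.isUnit_iff_isUnit_det A).2 (Ne.isUnit hd))
  obtain ⟨v, hv0, hv⟩ := (Matrix.exists_mulVec_eq_zero_iff).mpr hdet
  have hMv : (Mmat n (ξ:ℤ)).mulVec v = β • v := by
    have h1 : A.mulVec v = (algebraMap ℝ (Matrix (Fin n) (Fin n) ℝ) β).mulVec v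
        - (Mmat n (ξ:ℤ)).mulVec v := Matrix.sub_mulVec _ _ _
    have h2 : (algebraMap ℝ (Matrix (Fin n) (Fin n) ℝ) β).mulVec v = β • v := by
      rw [Algebra.algebraMap_eq_smul_one, Matrix.smul_mulVec, Matrix.one_mulVec]
    rw [hv, h2] at h1
    exact (sub_eq_zero.mp h1.symm).symm
  -- quantities
  set a : Fin n → ℝ :=
    fun j => (1 - Real.cos (2 * Real.pi * ((ξ:ℤ):ℝ) * ((j:ℕ):ℝ) / (n:ℝ))) / 2 with ha_def
  set S := ∑ j : Fin n, v j ^ 2 with hSdef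
  set P := ∑ j : Fin n, a j * v j ^ 2 with hPdef
  set D := ∑ j : Fin n, (v (j + 1) - v j)^2 with hDdef
  have hq : (1 - β) * S = P + (1/4) * D := qform hn (ξ:ℤ) v β hMv
  have hSpos : 0 < S := by
    have hj : ∃ j, v j ≠ 0 := by
      by_contra h
      push_neg at h
      exact hv0 (funext h)
    obtain ⟨j, hj⟩ := hj
    exact Finset.sum_pos' (fun i _ => sq_nonneg _) ⟨j, Finset.mem_univ j, by positivity⟩
  -- potential bound via dZ
  have hpot : ∀ j : Fin n, 4 * dZ ((ξ:ℝ) * ((j:ℕ):ℝ) / (n:ℝ)) ^ 2 ≤ a j := by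
    intro j
    have e : 2 * Real.pi * ((ξ:ℤ):ℝ) * ((j:ℕ):ℝ) / (n:ℝ)
        = 2 * Real.pi * ((ξ:ℝ) * ((j:ℕ):ℝ) / (n:ℝ)) := by push_cast; ring
    rw [ha_def]
    simp only []
    rw [e]
    exact potential_lower _
  have ha_nn : ∀ j, 0 ≤ a j := by
    intro j
    have := hpot j
    have h0 : (0:ℝ) ≤ 4 * dZ ((ξ:ℝ) * ((j:ℕ):ℝ) / (n:ℝ)) ^ 2 := by positivity
    linarith
  -- the two-point lower bound
  set α := ((L:ℝ) * s)^2 with hα_def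
  have hαpos : 0 < α := by positivity
  have h2 : ∀ j : Fin n, α ≤ a j ∨ α ≤ a (j + (L : Fin n)) := by
    intro j
    set u := (ξ:ℝ) * ((j:ℕ):ℝ) / (n:ℝ) with hu
    set w := (ξ:ℝ) * (((j + (L : Fin n) : Fin n):ℕ):ℝ) / (n:ℝ) with hw
    have hls0 : 0 ≤ (L:ℝ) * s := mul_nonneg (Nat.cast_nonneg L) (dZ_nonneg _)
    have key1 : (L:ℝ) * s ≤ dZ u + dZ w := by
      set B : ℕ := (j:ℕ) + L with hB
      set Aq : ℕ := ((j + (L : Fin n) : Fin n):ℕ) with hAq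
      have hA' : Aq = B % n := by
        rw [hAq, Fin.add_def]
        simp only [Fin.val_natCast]
        rw [hB, Nat.add_mod (j:ℕ) L n, Nat.mod_eq_of_lt j.isLt]
      obtain ⟨k, hBA⟩ : ∃ k : ℕ, B = Aq + n * k := ⟨B / n, by
        rw [hA']; exact (Nat.mod_add_div B n).symm⟩
      have hBAr : (B:ℝ) = (Aq:ℝ) + (n:ℝ) * (k:ℝ) := by exact_mod_cast hBA
      have hfull : (ξ:ℝ) * (B:ℝ) / (n:ℝ) = w + (((ξ * k : ℕ) : ℤ) : ℝ) := by
        rw [hw, hBAr]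
        push_cast
        field_simp
      have hfull2 : dZ ((ξ:ℝ) * (B:ℝ) / (n:ℝ)) = dZ w := by rw [hfull, dZ_add_int]
      have hdiff : (L:ℝ) * ((ξ:ℝ)/(n:ℝ)) = (ξ:ℝ) * (B:ℝ) / (n:ℝ) + (- u) := by
        rw [hB, hu]; push_cast; field_simp; ring
      have htri : dZ ((L:ℝ) * ((ξ:ℝ)/(n:ℝ)))
          ≤ dZ ((ξ:ℝ) * (B:ℝ) / (n:ℝ)) + dZ u := by
        rw [hdiff]
        exact (dZ_triangle _ _).trans (by rw [dZ_neg])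
      rw [dZ_nat_mul L hLs, hfull2] at htri
      linarith
    rcases le_or_gt ((L:ℝ) * s / 2) (dZ u) with h | h
    · left
      have hp := hpot j
      have hsq := mul_self_le_mul_self (by linarith : (0:ℝ) ≤ (L:ℝ) * s / 2) h
      have h4 : α ≤ 4 * dZ u ^ 2 := by rw [hα_def]; nlinarith [hsq]
      linarith
    · right
      have hdw : (L:ℝ) * s / 2 ≤ dZ w := by linarith
      have hp := hpot (j + (L : Fin n))
      have hsq := mul_self_le_mul_self (by linarith : (0:ℝ) ≤ (L:ℝ) * s / 2) hdw
      have h4 : α ≤ 4 * dZ w ^ 2 := by rw [hα_def]; nlinarith [hsq]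
      have hww : dZ ((ξ:ℝ) * (((j + (L : Fin n) : Fin n):ℕ):ℝ) / (n:ℝ)) = dZ w := by rw [hw]
      rw [hww] at hp
      linarith
  -- core inequality
  have hcore : S ≤ (4/α) * P + 2 * (L:ℝ)^2 * D := core v a L α hαpos ha_nn h2
  -- combine
  set γ := min (((L:ℝ) * s)^2 / 4) (1/(8*(L:ℝ)^2)) with hγ_def
  have hγ1 : γ ≤ α / 4 := by rw [hγ_def, hα_def]; exact min_le_left _ _
  have hγ2 : γ ≤ 1/(8*(L:ℝ)^2) := min_le_right _ _
  have hγnn : 0 ≤ γ := le_min (by positivity) (by positivity)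
  have hLpos : (0:ℝ) < (L:ℝ) := by exact_mod_cast hL
  have hPnn : 0 ≤ P := Finset.sum_nonneg (fun j _ => mul_nonneg (ha_nn j) (sq_nonneg _))
  have hDnn : 0 ≤ D := Finset.sum_nonneg (fun j _ => sq_nonneg _)
  have hc1 : γ * (4/α) ≤ 1 := by
    calc γ * (4/α) ≤ (α/4) * (4/α) := by
          apply mul_le_mul_of_nonneg_right hγ1 (by positivity)
      _ = 1 := by field_simp
  have hc2 : γ * (2 * (L:ℝ)^2) ≤ 1/4 := by
    calc γ * (2 * (L:ℝ)^2) ≤ (1/(8*(L:ℝ)^2)) * (2 * (L:ℝ)^2) := by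
          apply mul_le_mul_of_nonneg_right hγ2 (by positivity)
      _ = 1/4 := by field_simp; ring
  have hfinal : γ * S ≤ (1 - β) * S := by
    calc γ * S ≤ γ * ((4/α) * P + 2 * (L:ℝ)^2 * D) := mul_le_mul_of_nonneg_left hcore hγnn
      _ = (γ * (4/α)) * P + (γ * (2 * (L:ℝ)^2)) * D := by ring
      _ ≤ 1 * P + (1/4) * D := by
          apply add_le_add (mul_le_mul_of_nonneg_right hc1 hPnn)
            (mul_le_mul_of_nonneg_right hc2 hDnn)
      _ = P + (1/4) * D := by ring
      _ = (1 - β) * S := hq.symm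
  exact le_of_mul_le_mul_right (by linarith [hfinal]) hSpos

end Gap

set_option maxHeartbeats 2000000 in
/-- There is a universal constant `θ > 0` such that for every `n ≥ 3` and
`1 ≤ ξ ≤ n / log n`, the largest eigenvalue of `M(ξ)` is at most
`1 - θ·(ξ/n)^{4/3}`; equivalently, every eigenvalue `β` of `M(ξ)` satisfies
`β ≤ 1 - θ·(ξ/n)^{4/3}`. -/
theorem Mmat_top_eigenvalue_bound_small_xi :
    ∃ θ : ℝ, 0 < θ ∧
      ∀ n : ℕ, 3 ≤ n → ∀ ξ : ℕ, 1 ≤ ξ → (ξ : ℝ) ≤ (n : ℝ) / Real.log n →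
        ∀ β ∈ spectrum ℝ (Mmat n (ξ : ℤ)),
          β ≤ 1 - θ * ((ξ : ℝ) / (n : ℝ)) ^ ((4 : ℝ) / 3) := by
  refine ⟨1/1024, by norm_num, ?_⟩
  intro n hn ξ hξ1 hξlog β hβ
  have hn0 : (0:ℝ) < n := by positivity
  obtain ⟨r, hr_def⟩ : ∃ r : ℝ, r = (ξ:ℝ) / (n:ℝ) := ⟨_, rfl⟩
  have hr_pos : 0 < r := by
    rw [hr_def]
    apply div_pos _ hn0
    exact_mod_cast hξ1
  -- log facts
  have hexp15 : Real.exp (1/15) ≤ 15/14 := by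
    have h := Real.add_one_le_exp (-(1/15):ℝ)
    have hpos : 0 < Real.exp ((1:ℝ)/15) := Real.exp_pos _
    rw [Real.exp_neg] at h
    have hinv : (Real.exp ((1:ℝ)/15))⁻¹ * Real.exp ((1:ℝ)/15) = 1 :=
      inv_mul_cancel₀ (ne_of_gt hpos)
    nlinarith [mul_le_mul_of_nonneg_right h hpos.le]
  have hexp : Real.exp (16/15) < 3 := by
    have he : Real.exp ((16:ℝ)/15) = Real.exp 1 * Real.exp (1/15) := by
      rw [← Real.exp_add]; norm_num
    rw [he]
    have h1 : Real.exp 1 < 2.7182818286 := Real.exp_one_lt_d9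
    nlinarith [Real.exp_pos ((1:ℝ)/15), (Real.exp_pos (1:ℝ)).le]
  have hlog3 : (16:ℝ)/15 < Real.log 3 := by
    rw [Real.lt_log_iff_exp_lt (by norm_num : (0:ℝ) < 3)]
    exact hexp
  have hlogn : (16:ℝ)/15 < Real.log n := by
    refine lt_of_lt_of_le hlog3 (Real.log_le_log (by norm_num) ?_)
    exact_mod_cast hn
  have hlogn_pos : 0 < Real.log n := by linarith
  have hr_log : r ≤ 1 / Real.log n := by
    rw [hr_def, div_le_div_iff₀ hn0 hlogn_pos]
    have h := mul_le_mul_of_nonneg_right hξlog hlogn_pos.le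
    rw [div_mul_cancel₀ _ (ne_of_gt hlogn_pos)] at h
    linarith
  have hr_lt : r < 15/16 := by
    have h1 : 1 / Real.log n < 15/16 := by
      rw [div_lt_div_iff₀ hlogn_pos (by norm_num : (0:ℝ) < 16)]
      linarith
    linarith
  have hr_le1 : r ≤ 1 := by linarith
  -- s facts
  obtain ⟨s, hs_def⟩ : ∃ s : ℝ, s = dZ r := ⟨_, rfl⟩
  have hdz : dZ ((ξ:ℝ)/(n:ℝ)) = s := by rw [hs_def, hr_def]
  have hs_half : s ≤ 1/2 := by rw [hs_def]; exact dZ_le_half r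
  have hs_cases : (r ≤ 1/2 ∧ s = r) ∨ (1/2 < r ∧ s = 1 - r) := by
    rcases le_or_gt r (1/2) with h | h
    · left
      refine ⟨h, ?_⟩
      rw [hs_def, dZ_eq_abs (by rw [abs_of_nonneg hr_pos.le]; exact h)]
      exact abs_of_nonneg hr_pos.le
    · right
      refine ⟨h, ?_⟩
      have he : r = (r - 1) + ((1:ℤ):ℝ) := by push_cast; ring
      rw [hs_def, he, dZ_add_int]
      rw [dZ_eq_abs (by rw [abs_of_nonpos (by linarith)]; linarith)]
      rw [abs_of_nonpos (by linarith)]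
      ring
  have hs_pos : 0 < s := by
    rcases hs_cases with ⟨_, h⟩ | ⟨_, h⟩
    · rw [h]; exact hr_pos
    · rw [h]; linarith
  have hrpow_le_r : r ^ ((4:ℝ)/3) ≤ r := by
    nth_rewrite 2 [show r = r ^ (1:ℝ) by rw [Real.rpow_one]]
    exact Real.rpow_le_rpow_of_exponent_ge hr_pos hr_le1 (by norm_num)
  have hrpow_le_1 : r ^ ((4:ℝ)/3) ≤ 1 := Real.rpow_le_one hr_pos.le hr_le1 (by norm_num)
  have hgoal : (1:ℝ)/1024 * r ^ ((4:ℝ)/3) ≤ 1 - β → β ≤ 1 - 1/1024 * ((ξ:ℝ)/(n:ℝ)) ^ ((4:ℝ)/3) := by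
    rw [← hr_def]
    intro h
    linarith
  apply hgoal
  rcases le_or_gt s (1/16) with hsmall | hbig
  · -- small s : r ≤ 1/2 and s = r
    have hsr : s = r := by
      rcases hs_cases with ⟨_, h⟩ | ⟨hr2, h⟩
      · exact h
      · exfalso
        rw [h] at hsmall
        linarith
    have hsqrt_pos : 0 < Real.sqrt s := Real.sqrt_pos.2 hs_pos
    have hsqrt_le : Real.sqrt s ≤ 1/4 := by
      have h := Real.sqrt_le_sqrt hsmall
      rwa [show ((1:ℝ)/16) = (1/4)^2 by norm_num,
        Real.sqrt_sq (by norm_num : (0:ℝ) ≤ 1/4)] at h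
    have hsq_sqrt : Real.sqrt s ^ 2 = s := Real.sq_sqrt hs_pos.le
    have hinv_ge1 : 1 ≤ (Real.sqrt s)⁻¹ := by
      rw [le_inv_comm₀ (by norm_num) hsqrt_pos]
      linarith
    obtain ⟨L, hL1, hLge, hLle⟩ : ∃ L : ℕ, 1 ≤ L ∧ (Real.sqrt s)⁻¹ ≤ (L:ℝ) ∧
        (L:ℝ) ≤ 2 * (Real.sqrt s)⁻¹ := by
      refine ⟨⌈(Real.sqrt s)⁻¹⌉₊, ?_, Nat.le_ceil _, ?_⟩
      · exact_mod_cast Nat.one_le_ceil_iff.2 (by positivity)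
      · have h := (Nat.ceil_lt_add_one (by positivity : (0:ℝ) ≤ (Real.sqrt s)⁻¹)).le
        linarith
    have hLpos : (0:ℝ) < (L:ℝ) := by exact_mod_cast hL1
    have hinv_mul : (Real.sqrt s)⁻¹ * s = Real.sqrt s := by
      rw [inv_mul_eq_div, div_eq_iff (ne_of_gt hsqrt_pos), ← sq]
      exact hsq_sqrt.symm
    have hLs_le : (L:ℝ) * s ≤ 1/2 := by
      calc (L:ℝ) * s ≤ (2 * (Real.sqrt s)⁻¹) * s :=
            mul_le_mul_of_nonneg_right hLle hs_pos.le
        _ = 2 * Real.sqrt s := by rw [mul_assoc, hinv_mul]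
        _ ≤ 1/2 := by linarith
    have hgap := gap_lemma n hn ξ β hβ L hL1 (by rw [hdz]; exact hs_pos)
      (by rw [hdz]; exact hLs_le)
    rw [hdz] at hgap
    have hLs_ge : Real.sqrt s ≤ (L:ℝ) * s := by
      calc Real.sqrt s = (Real.sqrt s)⁻¹ * s := hinv_mul.symm
        _ ≤ (L:ℝ) * s := mul_le_mul_of_nonneg_right hLge hs_pos.le
    have hbound1 : s / 4 ≤ ((L:ℝ) * s)^2 / 4 := by
      nlinarith [hLs_ge, hsqrt_pos, hsq_sqrt]
    have hbound2 : s / 32 ≤ 1/(8*(L:ℝ)^2) := by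
      have h7 : ((Real.sqrt s)⁻¹)^2 = s⁻¹ := by
        rw [inv_pow, hsq_sqrt]
      have h6 : (L:ℝ)^2 ≤ 4 * s⁻¹ := by
        rw [← h7]
        nlinarith [hLle, hLpos, hinv_ge1]
      have h8 : s * (8 * (L:ℝ)^2) ≤ 32 := by
        have h9 : s * (8 * (L:ℝ)^2) ≤ s * (8 * (4 * s⁻¹)) := by
          apply mul_le_mul_of_nonneg_left _ hs_pos.le
          linarith
        have h10 : s * (8 * (4 * s⁻¹)) = 32 := by
          field_simp
          norm_num
        linarith
      rw [div_le_div_iff₀ (by norm_num : (0:ℝ) < 32)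
        (by nlinarith : (0:ℝ) < 8*(L:ℝ)^2)]
      linarith
    have hmin : s/32 ≤ min (((L:ℝ) * s)^2 / 4) (1/(8*(L:ℝ)^2)) := by
      apply le_min
      · linarith
      · exact hbound2
    have hfin : s/32 ≤ 1 - β := le_trans hmin hgap
    have hth : (1:ℝ)/1024 * r ^ ((4:ℝ)/3) ≤ r/32 := by nlinarith [hrpow_le_r, hr_pos.le]
    rw [hsr] at hfin
    linarith
  · -- big s : L = 1
    have hLs_le : ((1:ℕ):ℝ) * dZ ((ξ:ℝ)/(n:ℝ)) ≤ 1/2 := by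
      rw [Nat.cast_one, one_mul, hdz]; exact hs_half
    have hgap := gap_lemma n hn ξ β hβ 1 le_rfl (by rw [hdz]; exact hs_pos) hLs_le
    rw [hdz] at hgap
    have hmin : (1:ℝ)/1024 ≤ min ((((1:ℕ):ℝ) * s)^2 / 4) (1/(8*((1:ℕ):ℝ)^2)) := by
      rw [Nat.cast_one]
      apply le_min
      · rw [one_mul]
        nlinarith
      · norm_num
    have hfin : (1:ℝ)/1024 ≤ 1 - β := le_trans hmin hgap
    nlinarith [hrpow_le_1]
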